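/- arXiv:1303.5603 — 4 statements merged into one kernel-verified Lean document; each statement's English description precedes it below -/
import Mathlib

section
/- If G is a d-leveled graph (every maximal clique has size d+1, and every d-clique is contained in exactly two (d+1)-cliques) whose vertex set is partitioned as I ⊔ X where I is an independent set, then |I| ≤ 2·|X|^d. -/
/-- A graph is `d`-leveled if every maximal clique has size `d+1` and every clique of
size `d` is contained in exactly two cliques of size `d+1`. -/
def SimpleGraph.IsLeveled {V : Type*} (G : SimpleGraph V) (d : ℕ) : Prop :=
  (∀ s : Finset V, G.IsClique s → (∀ t : Finset V, G.IsClique t → s ⊆ t → s = t) →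
    s.card = d + 1) ∧
  (∀ s : Finset V, G.IsNClique d s →
    {t : Finset V | G.IsNClique (d + 1) t ∧ s ⊆ t}.ncard = 2)

/-- If `G` is a `d`-leveled graph whose vertex set is partitioned as `I ⊔ X` with `I`
an independent set, then `|I| ≤ 2 |X|^d`. -/
theorem leveled_independent_bound {V : Type*} [Fintype V] [DecidableEq V]
    (G : SimpleGraph V) (d : ℕ) (hG : G.IsLeveled d)
    (I X : Finset V) (hpart : I ∪ X = Finset.univ) (hdisj : Disjoint I X)
    (hI : ∀ u ∈ I, ∀ v ∈ I, ¬ G.Adj u v) :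
    I.card ≤ 2 * X.card ^ d := by
  classical
  -- Every vertex of `I` lies in a maximal clique, which has size `d+1` and whose
  -- other `d` vertices lie in `X`.
  have key : ∀ v ∈ I, ∃ s : Finset V, s ⊆ X ∧ G.IsNClique d s ∧
      G.IsNClique (d + 1) (insert v s) := by
    intro v hv
    obtain ⟨s, hs, hmax⟩ := Finset.exists_max_image
      ((Finset.univ.powerset).filter (fun s : Finset V => v ∈ s ∧ G.IsClique (s : Set V))) Finset.card
      ⟨{v}, by simp [SimpleGraph.isClique_singleton]⟩
    simp only [Finset.mem_filter] at hs
    obtain ⟨-, hvs, hclique⟩ := hs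
    have hmaxal : ∀ t : Finset V, G.IsClique t → s ⊆ t → s = t := by
      intro t ht hst
      refine Finset.eq_of_subset_of_card_le hst ?_
      exact hmax t (by simp [ht, hst hvs])
    have hcard := hG.1 s hclique hmaxal
    refine ⟨s.erase v, ?_, ?_, ?_⟩
    · intro w hw
      have hws := Finset.mem_of_mem_erase hw
      have hwv : w ≠ v := Finset.ne_of_mem_erase hw
      have hwI : w ∉ I := fun hwI =>
        hI w hwI v hv (hclique hws hvs hwv)
      have : w ∈ I ∪ X := hpart ▸ Finset.mem_univ w
      rcases Finset.mem_union.1 this with h | h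
      · exact absurd h hwI
      · exact h
    · exact ⟨hclique.subset (Finset.erase_subset _ _), by
        rw [Finset.card_erase_of_mem hvs, hcard]; omega⟩
    · have : insert v (s.erase v) = s := Finset.insert_erase hvs
      rw [this]
      exact ⟨hclique, hcard⟩
  -- choose such a clique for every `v ∈ I`
  choose! f hfX hfN hfins using key
  -- each fiber of `f` over `I` has at most 2 elements
  have hfiber : ∀ a ∈ I.image f, (I.filter fun x => f x = a).card ≤ 2 := by
    intro a ha
    obtain ⟨v, hvI, hva⟩ := Finset.mem_image.1 ha
    set T : Set (Finset V) := {t : Finset V | G.IsNClique (d + 1) t ∧ a ⊆ t} with hT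
    have hT2 : T.ncard = 2 := hG.2 a (hva ▸ hfN v hvI)
    have hTfin : T.Finite := Set.finite_of_ncard_ne_zero (by omega)
    set F : Finset V := I.filter fun x => f x = a with hF
    have hmapsto : ∀ w ∈ F, insert w a ∈ T := by
      intro w hw
      rw [hF, Finset.mem_filter] at hw
      exact ⟨hw.2 ▸ hfins w hw.1, Finset.subset_insert _ _⟩
    have hinj : ∀ w ∈ F, ∀ w' ∈ F, insert w a = insert w' a → w = w' := by
      intro w hw w' hw' h
      rw [hF, Finset.mem_filter] at hw hw'
      have hwa : w ∉ a := fun hmem =>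
        (Finset.disjoint_left.1 hdisj) hw.1 (hfX w hw.1 (by rw [hw.2]; exact hmem))
      have : w ∈ insert w' a := h ▸ Finset.mem_insert_self w a
      rcases Finset.mem_insert.1 this with h' | h'
      · exact h'
      · exact absurd h' hwa
    calc F.card = (F.image (fun w => insert w a)).card :=
          (Finset.card_image_of_injOn hinj).symm
      _ ≤ hTfin.toFinset.card := Finset.card_le_card (by
          intro t ht
          obtain ⟨w, hw, rfl⟩ := Finset.mem_image.1 ht
          exact hTfin.mem_toFinset.2 (hmapsto w hw))
      _ = 2 := by rw [← Set.ncard_eq_toFinset_card T hTfin, hT2]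
  -- the image of `f` consists of `d`-subsets of `X`
  have himage : I.image f ⊆ X.powersetCard d := by
    intro a ha
    obtain ⟨v, hvI, rfl⟩ := Finset.mem_image.1 ha
    exact Finset.mem_powersetCard.2 ⟨hfX v hvI, (hfN v hvI).2⟩
  calc I.card ≤ 2 * (I.image f).card := Finset.card_le_mul_card_image I 2 hfiber
    _ ≤ 2 * (X.powersetCard d).card := by
        exact Nat.mul_le_mul_left 2 (Finset.card_le_card himage)
    _ = 2 * X.card.choose d := by rw [Finset.card_powersetCard]
    _ ≤ 2 * X.card ^ d := Nat.mul_le_mul_left 2 (Nat.choose_le_pow _ _)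
end

section
/- If G is a d-leveled graph and σ is a clique in G of size |σ| ≤ d, then the link lk_G σ is a (d − |σ|)-leveled graph. In particular, in a d-leveled graph the link of every clique of size d−1 is a disjoint union of cycles. -/
/-- The graph link of a clique `σ` in `G`: the induced subgraph of `G` on the common
neighborhood of all vertices of `σ`. -/
def SimpleGraph.graphLink {V : Type*} (G : SimpleGraph V) (σ : Finset V) :
    SimpleGraph {v : V | ∀ u ∈ σ, G.Adj u v} :=
  G.induce {v : V | ∀ u ∈ σ, G.Adj u v}

namespace LinkAux

variable {V : Type*} [DecidableEq V] (G : SimpleGraph V) (σ : Finset V)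

/-- The common neighborhood of `σ`. -/
abbrev Lk : Set V := {v : V | ∀ u ∈ σ, G.Adj u v}

noncomputable def up (s : Finset (Lk G σ)) : Finset V := σ ∪ s.image Subtype.val

noncomputable def down (t : Finset V) : Finset (Lk G σ) :=
  @Finset.subtype _ (· ∈ Lk G σ) (Classical.decPred _) t

variable {G σ}

lemma not_mem_of_mem_lk {v : V} (hv : v ∈ Lk G σ) : v ∉ σ :=
  fun hvσ => (G.loopless.irrefl v (hv v hvσ))

lemma mem_up {s : Finset (Lk G σ)} {v : V} :
    v ∈ up G σ s ↔ v ∈ σ ∨ ∃ a ∈ s, (a : V) = v := by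
  simp [up]

lemma mem_down {t : Finset V} {a : Lk G σ} : a ∈ down G σ t ↔ (a : V) ∈ t := by
  simp [down]

lemma card_up (s : Finset (Lk G σ)) : (up G σ s).card = σ.card + s.card := by
  rw [up, Finset.card_union_of_disjoint, Finset.card_image_of_injective _ Subtype.val_injective]
  rw [Finset.disjoint_left]
  rintro v hvσ hv
  simp only [Finset.mem_image] at hv
  obtain ⟨a, -, rfl⟩ := hv
  exact not_mem_of_mem_lk a.2 hvσ

lemma down_up (s : Finset (Lk G σ)) : down G σ (up G σ s) = s := by
  ext a
  simp only [mem_down, mem_up]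
  constructor
  · rintro (h | ⟨b, hb, hba⟩)
    · exact absurd h (not_mem_of_mem_lk a.2)
    · rwa [Subtype.val_injective hba] at hb
  · exact fun h => Or.inr ⟨a, h, rfl⟩

lemma up_injective : Function.Injective (up G σ) := by
  intro s t h
  rw [← down_up (G := G) (σ := σ) s, h, down_up]

lemma subset_up (s : Finset (Lk G σ)) : σ ⊆ up G σ s := Finset.subset_union_left

lemma up_mono {s t : Finset (Lk G σ)} (h : s ⊆ t) : up G σ s ⊆ up G σ t :=
  Finset.union_subset_union_right (Finset.image_subset_image h)

lemma down_mono {s t : Finset V} (h : s ⊆ t) : down G σ s ⊆ down G σ t := by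
  intro a ha
  rw [mem_down] at ha ⊢
  exact h ha

lemma isClique_up (hσ : G.IsClique σ) (s : Finset (Lk G σ)) :
    G.IsClique (up G σ s) ↔ (G.graphLink σ).IsClique s := by
  constructor
  · intro h a ha b hb hab
    have := h (x := (a : V)) (mem_up.2 (Or.inr ⟨a, ha, rfl⟩))
      (y := (b : V)) (mem_up.2 (Or.inr ⟨b, hb, rfl⟩)) (fun hh => hab (Subtype.ext hh))
    simpa [SimpleGraph.graphLink] using this
  · intro h v hv w hw hvw
    rw [Finset.mem_coe, mem_up] at hv hw
    rcases hv with hv | ⟨a, ha, rfl⟩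
    · rcases hw with hw | ⟨b, hb, rfl⟩
      · exact hσ hv hw hvw
      · exact b.2 v hv
    · rcases hw with hw | ⟨b, hb, rfl⟩
      · exact (a.2 w hw).symm
      · have hab : a ≠ b := fun hh => hvw (congrArg Subtype.val hh)
        have := h ha hb hab
        simpa [SimpleGraph.graphLink] using this

lemma isClique_down {t : Finset V} (ht : G.IsClique t) :
    (G.graphLink σ).IsClique (down G σ t) := by
  intro a ha b hb hab
  rw [Finset.mem_coe, mem_down] at ha hb
  have := ht ha hb (fun hh => hab (Subtype.ext hh))
  simpa [SimpleGraph.graphLink] using this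

lemma up_down {t : Finset V} (hσt : σ ⊆ t) (ht : G.IsClique t) :
    up G σ (down G σ t) = t := by
  ext v
  rw [mem_up]
  constructor
  · rintro (hv | ⟨a, ha, rfl⟩)
    · exact hσt hv
    · exact mem_down.1 ha
  · intro hv
    by_cases hvσ : v ∈ σ
    · exact Or.inl hvσ
    · refine Or.inr ⟨⟨v, ?_⟩, mem_down.2 hv, rfl⟩
      intro u hu
      exact ht (hσt hu) hv (fun hh => hvσ (hh ▸ hu))

end LinkAux

open LinkAux in
/-- If `G` is `d`-leveled and `σ` is a clique of size at most `d`, then the link of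
`σ` is `(d - |σ|)`-leveled.  In particular the link of a clique of size `d - 1` is
1-leveled, i.e. a disjoint union of cycles. -/
theorem isLeveled_graphLink {V : Type*} [DecidableEq V] (G : SimpleGraph V) (d : ℕ)
    (hG : G.IsLeveled d) (σ : Finset V) (hσ : G.IsClique σ) (hcard : σ.card ≤ d) :
    (G.graphLink σ).IsLeveled (d - σ.card) ∧
      (σ.card + 1 = d → (G.graphLink σ).IsLeveled 1) := by
  classical
  obtain ⟨hmax, hcount⟩ := hG
  have key : (G.graphLink σ).IsLeveled (d - σ.card) := by
    constructor
    · -- maximal cliques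
      intro s hs hsmax
      have hup : G.IsClique (up G σ s) := (isClique_up hσ s).2 hs
      have hupmax : ∀ t : Finset V, G.IsClique t → up G σ s ⊆ t → up G σ s = t := by
        intro t ht hsub
        have hσt : σ ⊆ t := (subset_up s).trans hsub
        have hsdt : s ⊆ down G σ t := by
          rw [← down_up (G := G) (σ := σ) s]
          exact down_mono hsub
        have := hsmax (down G σ t) (isClique_down ht) hsdt
        rw [this, up_down hσt ht]
      have hc := hmax (up G σ s) hup hupmax
      rw [card_up] at hc
      omega
    · -- counting
      intro s hs
      have hupN : G.IsNClique d (up G σ s) := by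
        refine ⟨(isClique_up hσ s).2 hs.1, ?_⟩
        rw [card_up, hs.2]
        omega
      have hT := hcount (up G σ s) hupN
      have himg : up G σ '' {t : Finset (Lk G σ) |
            (G.graphLink σ).IsNClique (d - σ.card + 1) t ∧ s ⊆ t}
          = {t : Finset V | G.IsNClique (d + 1) t ∧ up G σ s ⊆ t} := by
        ext t
        simp only [Set.mem_image, Set.mem_setOf_eq]
        constructor
        · rintro ⟨u, ⟨⟨hu1, hu2⟩, hsu⟩, rfl⟩
          refine ⟨⟨(isClique_up hσ u).2 hu1, ?_⟩, up_mono hsu⟩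
          rw [card_up, hu2]
          omega
        · rintro ⟨⟨ht1, ht2⟩, hsub⟩
          have hσt : σ ⊆ t := (subset_up s).trans hsub
          refine ⟨down G σ t, ⟨⟨isClique_down ht1, ?_⟩, ?_⟩, up_down hσt ht1⟩
          · have := card_up (down G σ t)
            rw [up_down hσt ht1, ht2] at this
            omega
          · rw [← down_up (G := G) (σ := σ) s]
            exact down_mono hsub
      rw [← himg, Set.ncard_image_of_injective _ up_injective] at hT
      exact hT
  refine ⟨key, fun h => ?_⟩
  have : d - σ.card = 1 := by omega
  rwa [this] at key
end

section
/- The join of s cycles, each of length ≥ 4, is a (2s−1)-leveled graph: every maximal clique has size 2s and every clique of size 2s−1 is contained in exactly two cliques of size 2s. -/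
open SimpleGraph Finset

open Fin.CommRing in
lemma induced_cycle_nbrs {W : Type*} {H : SimpleGraph W} {k : ℕ} (hk : 4 ≤ k)
    (e : H ≃g SimpleGraph.cycleGraph k) (v : W) :
    ∃ a b : W, a ≠ b ∧ H.Adj v a ∧ H.Adj v b ∧ ¬ H.Adj a b ∧
      ∀ w, H.Adj v w → w = a ∨ w = b := by
  obtain ⟨m, rfl⟩ : ∃ m, k = m + 4 := ⟨k - 4, by omega⟩
  have h1 : ((1 : Fin (m+4)) : ℕ) = 1 := Fin.val_one _
  have h2 : ((2 : Fin (m+4)) : ℕ) = 2 := by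
    show ((1+1 : Fin (m+4)) : ℕ) = 2
    rw [Fin.add_def, h1]; exact Nat.mod_eq_of_lt (by omega)
  have h3 : ((3 : Fin (m+4)) : ℕ) = 3 := by
    show ((2+1 : Fin (m+4)) : ℕ) = 3
    rw [Fin.add_def, h1, h2]; exact Nat.mod_eq_of_lt (by omega)
  have key2 : (2 : Fin (m+4)) ≠ 1 := by
    intro h; rw [Fin.ext_iff, h1, h2] at h; omega
  have key2' : (2 : Fin (m+4)) ≠ 0 := by
    intro h; rw [Fin.ext_iff, h2] at h; simp at h
  have key3 : (-2 : Fin (m+4)) ≠ 1 := by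
    intro h
    have h30 : (3 : Fin (m+4)) = 0 := by linear_combination -h
    rw [Fin.ext_iff, h3] at h30; simp at h30
  have cadj : ∀ u w : Fin (m+4), (cycleGraph (m+4)).Adj u w ↔ u - w = 1 ∨ w - u = 1 :=
    fun u w => cycleGraph_adj
  set x := e v with hx
  have hvx : e.symm x = v := e.symm_apply_apply v
  have hne : x - 1 ≠ x + 1 := by
    intro h
    exact key2' (by linear_combination -h)
  refine ⟨e.symm (x - 1), e.symm (x + 1), fun h => hne (e.symm.injective h), ?_, ?_, ?_, ?_⟩
  · rw [← hvx]
    rw [e.symm.map_adj_iff, cadj]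
    left; ring
  · rw [← hvx]
    rw [e.symm.map_adj_iff, cadj]
    right; ring
  · rw [e.symm.map_adj_iff, cadj]
    push_neg
    constructor
    · intro h; exact key3 (by linear_combination h)
    · intro h; exact key2 (by linear_combination h)
  · intro w hadj
    rw [← e.map_adj_iff, cadj] at hadj
    rcases hadj with h | h
    · left
      have : e w = x - 1 := by linear_combination -h
      rw [← this, e.symm_apply_apply]
    · right
      have : e w = x + 1 := by linear_combination h
      rw [← this, e.symm_apply_apply]



/-- The join of `s` cycles, each of length at least 4, is a `(2s-1)`-leveled graph:
every maximal clique has size `2s` and every clique of size `2s-1` lies in exactly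
two cliques of size `2s`. -/
theorem join_of_cycles_isLeveled {V : Type*} [Fintype V] [DecidableEq V]
    (G : SimpleGraph V) (s : ℕ) (hs : 1 ≤ s)
    (n : Fin s → ℕ) (hn : ∀ i, 4 ≤ n i)
    (S : Fin s → Finset V)
    (hdisj : ∀ i j, i ≠ j → Disjoint (S i) (S j))
    (hcover : Finset.univ.biUnion S = Finset.univ)
    (hcross : ∀ i j, i ≠ j → ∀ u ∈ S i, ∀ v ∈ S j, G.Adj u v)
    (hcycle : ∀ i, Nonempty ((G.induce (S i : Set V)) ≃g SimpleGraph.cycleGraph (n i))) :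
    G.IsLeveled (2 * s - 1) := by
  classical
  -- every vertex lies in some part
  have hmem : ∀ v : V, ∃ i, v ∈ S i := by
    intro v
    have h : v ∈ Finset.univ.biUnion S := by rw [hcover]; exact Finset.mem_univ v
    simpa using h
  -- cross adjacency for vertices in different parts
  have hcross' : ∀ {u w : V} {i : Fin s}, u ∈ S i → w ∉ S i → u ≠ w → G.Adj u w := by
    intro u w i hu hw hne
    obtain ⟨j, hj⟩ := hmem w
    have hij : i ≠ j := fun h => hw (h ▸ hj)
    exact hcross i j hij u hu w hj
  -- two-neighbour property inside each part
  have hP : ∀ i, ∀ v ∈ S i, ∃ a ∈ S i, ∃ b ∈ S i, a ≠ b ∧ G.Adj v a ∧ G.Adj v b ∧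
      ¬ G.Adj a b ∧ ∀ w ∈ S i, G.Adj v w → w = a ∨ w = b := by
    intro i v hv
    obtain ⟨e⟩ := hcycle i
    obtain ⟨a, b, hab, hva, hvb, hnab, hall⟩ :=
      induced_cycle_nbrs (hn i) e ⟨v, by simpa using hv⟩
    refine ⟨a.1, by simpa using a.2, b.1, by simpa using b.2,
      fun h => hab (Subtype.ext h), by simpa using hva, by simpa using hvb,
      by simpa using hnab, ?_⟩
    intro w hw hadj
    have := hall ⟨w, by simpa using hw⟩ (by simpa using hadj)
    rcases this with h | h
    · left; exact congrArg Subtype.val h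
    · right; exact congrArg Subtype.val h
  -- each part is nonempty
  have hSne : ∀ i, (S i).Nonempty := by
    intro i
    obtain ⟨e⟩ := hcycle i
    have h4 := hn i
    exact ⟨(e.symm ⟨0, by omega⟩).1, by simpa using (e.symm ⟨0, by omega⟩).2⟩
  -- cliques meet each part in at most 2 vertices
  have hA : ∀ (C : Finset V), G.IsClique (C : Set V) → ∀ i, (C ∩ S i).card ≤ 2 := by
    intro C hC i
    by_contra hlt
    push_neg at hlt
    obtain ⟨T, hTsub, hT3⟩ := Finset.exists_subset_card_eq (show 3 ≤ (C ∩ S i).card by omega)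
    obtain ⟨x, y, z, hxy, hxz, hyz, hTeq⟩ := Finset.card_eq_three.mp hT3
    have hx := hTsub (hTeq ▸ Finset.mem_insert_self x {y, z})
    have hy := hTsub (hTeq ▸ (by simp : y ∈ ({x, y, z} : Finset V)))
    have hz := hTsub (hTeq ▸ (by simp : z ∈ ({x, y, z} : Finset V)))
    rw [Finset.mem_inter] at hx hy hz
    obtain ⟨a, haS, b, hbS, hab, hva, hvb, hnab, hall⟩ := hP i x hx.2
    have hyadj : G.Adj x y := hC hx.1 hy.1 hxy
    have hzadj : G.Adj x z := hC hx.1 hz.1 hxz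
    have hyzadj : G.Adj y z := hC hy.1 hz.1 hyz
    rcases hall y hy.2 hyadj with rfl | rfl <;>
      rcases hall z hz.2 hzadj with rfl | rfl
    · exact hyz rfl
    · exact hnab hyzadj
    · exact hnab hyzadj.symm
    · exact hyz rfl
  -- extension of small intersections
  have hB : ∀ (C : Finset V), G.IsClique (C : Set V) → ∀ i, (C ∩ S i).card ≤ 1 →
      ∃ w, w ∉ C ∧ G.IsClique ((insert w C : Finset V) : Set V) := by
    intro C hC i hle
    interval_cases h : (C ∩ S i).card
    · -- empty intersection
      have hempty : C ∩ S i = ∅ := Finset.card_eq_zero.mp h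
      obtain ⟨w, hwS⟩ := hSne i
      have hwC : w ∉ C := fun hw => by
        have : w ∈ C ∩ S i := Finset.mem_inter.mpr ⟨hw, hwS⟩
        simp [hempty] at this
      refine ⟨w, hwC, ?_⟩
      rw [Finset.coe_insert]
      refine hC.insert ?_
      intro u hu hne
      have huS : u ∉ S i := fun h' => by
        have : u ∈ C ∩ S i := Finset.mem_inter.mpr ⟨hu, h'⟩
        simp [hempty] at this
      exact hcross' hwS huS hne
    · -- singleton intersection
      obtain ⟨v, hv⟩ := Finset.card_eq_one.mp h
      have hvC : v ∈ C := (Finset.mem_inter.mp (hv ▸ Finset.mem_singleton_self v)).1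
      have hvS : v ∈ S i := (Finset.mem_inter.mp (hv ▸ Finset.mem_singleton_self v)).2
      obtain ⟨a, haS, b, hbS, hab, hva, hvb, hnab, hall⟩ := hP i v hvS
      have haC : a ∉ C := by
        intro haC
        have : a ∈ C ∩ S i := Finset.mem_inter.mpr ⟨haC, haS⟩
        rw [hv, Finset.mem_singleton] at this
        exact hva.ne' this
      refine ⟨a, haC, ?_⟩
      rw [Finset.coe_insert]
      refine hC.insert ?_
      intro u hu hne
      by_cases huv : u = v
      · subst huv; exact hva.symm
      · have huS : u ∉ S i := by
          intro h'
          have : u ∈ C ∩ S i := Finset.mem_inter.mpr ⟨hu, h'⟩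
          rw [hv, Finset.mem_singleton] at this
          exact huv this
        exact hcross' haS huS hne
  -- cardinality decomposition
  have hdecomp : ∀ C : Finset V, C.card = ∑ i, (C ∩ S i).card := by
    intro C
    have hCeq : C = Finset.univ.biUnion (fun i => C ∩ S i) := by
      ext v
      simp only [Finset.mem_biUnion, Finset.mem_univ, true_and, Finset.mem_inter]
      constructor
      · intro hv; obtain ⟨i, hi⟩ := hmem v; exact ⟨i, hv, hi⟩
      · rintro ⟨i, hv, _⟩; exact hv
    conv_lhs => rw [hCeq]
    exact Finset.card_biUnion fun i _ j _ hij =>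
      (hdisj i j hij).mono Finset.inter_subset_right Finset.inter_subset_right
  constructor
  · -- maximal cliques have size 2s
    intro C hC hmax
    have h2 : ∀ i, (C ∩ S i).card = 2 := by
      intro i
      rcases Nat.lt_or_ge ((C ∩ S i).card) 2 with h | h
      · obtain ⟨w, hwC, hcl⟩ := hB C hC i (by omega)
        have heq := hmax (insert w C) hcl (Finset.subset_insert w C)
        exact absurd (heq ▸ Finset.mem_insert_self w C) hwC
      · exact le_antisymm (hA C hC i) h
    rw [hdecomp C]
    simp only [h2, Finset.sum_const, Finset.card_univ, Fintype.card_fin, smul_eq_mul]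
    omega
  · -- cliques of size 2s-1 extend in exactly two ways
    intro C hC
    obtain ⟨hCcl, hCcard⟩ := hC
    have hsum : ∑ i, (C ∩ S i).card = 2 * s - 1 := (hdecomp C).symm.trans hCcard
    have hfle : ∀ i, (C ∩ S i).card ≤ 2 := hA C hCcl
    -- find the exceptional index
    have hg : ∑ i : Fin s, (2 - (C ∩ S i).card) = 1 := by
      have hsum2 : ∑ i : Fin s, ((2 - (C ∩ S i).card) + (C ∩ S i).card) = 2 * s := by
        have : ∀ i : Fin s, (2 - (C ∩ S i).card) + (C ∩ S i).card = 2 := fun i => by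
          have := hfle i; omega
        simp only [this, Finset.sum_const, Finset.card_univ, Fintype.card_fin, smul_eq_mul]
        ring
      rw [Finset.sum_add_distrib, hsum] at hsum2
      omega
    have hex : ∃ i₀, 2 - (C ∩ S i₀).card ≠ 0 := by
      by_contra hnone
      push_neg at hnone
      have h0 : ∑ i : Fin s, (2 - (C ∩ S i).card) = 0 :=
        Finset.sum_eq_zero (fun i _ => hnone i)
      omega
    obtain ⟨i₀, hi₀⟩ := hex
    have hsea := Finset.sum_erase_add Finset.univ (fun i => 2 - (C ∩ S i).card)
      (Finset.mem_univ i₀)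
    beta_reduce at hsea
    have herase : ∑ i ∈ Finset.univ.erase i₀, (2 - (C ∩ S i).card) = 0 := by
      have := hfle i₀
      omega
    have hone : (C ∩ S i₀).card = 1 := by
      have := hfle i₀
      omega
    have htwo : ∀ j, j ≠ i₀ → (C ∩ S j).card = 2 := by
      intro j hj
      have h0 := Finset.sum_eq_zero_iff.mp herase j
        (Finset.mem_erase.mpr ⟨hj, Finset.mem_univ j⟩)
      have := hfle j
      omega
    obtain ⟨v, hv⟩ := Finset.card_eq_one.mp hone
    have hvC : v ∈ C := (Finset.mem_inter.mp (hv ▸ Finset.mem_singleton_self v)).1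
    have hvS : v ∈ S i₀ := (Finset.mem_inter.mp (hv ▸ Finset.mem_singleton_self v)).2
    obtain ⟨a, haS, b, hbS, hab, hva, hvb, hnab, hall⟩ := hP i₀ v hvS
    -- any neighbour of v in S i₀ gives an extension
    have hkey : ∀ w, w ∈ S i₀ → G.Adj v w →
        w ∉ C ∧ G.IsNClique (2 * s - 1 + 1) (insert w C) := by
      intro w hwS hadj
      have hwC : w ∉ C := by
        intro hwC
        have : w ∈ C ∩ S i₀ := Finset.mem_inter.mpr ⟨hwC, hwS⟩
        rw [hv, Finset.mem_singleton] at this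
        exact hadj.ne' this
      refine ⟨hwC, ⟨?_, ?_⟩⟩
      · rw [Finset.coe_insert]
        refine hCcl.insert ?_
        intro u hu hne
        by_cases huv : u = v
        · subst huv; exact hadj.symm
        · have huS : u ∉ S i₀ := by
            intro h'
            have : u ∈ C ∩ S i₀ := Finset.mem_inter.mpr ⟨hu, h'⟩
            rw [hv, Finset.mem_singleton] at this
            exact huv this
          exact hcross' hwS huS hne
      · rw [Finset.card_insert_of_notMem hwC, hCcard]
    obtain ⟨haC, haN⟩ := hkey a haS hva
    obtain ⟨hbC, hbN⟩ := hkey b hbS hvb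
    have hset : {t : Finset V | G.IsNClique (2 * s - 1 + 1) t ∧ C ⊆ t} =
        {insert a C, insert b C} := by
      ext t
      simp only [Set.mem_setOf_eq, Set.mem_insert_iff, Set.mem_singleton_iff]
      constructor
      · rintro ⟨⟨htcl, htcard⟩, hCt⟩
        have hd1 : (t \ C).card = 1 := by
          rw [Finset.card_sdiff_of_subset hCt, htcard, hCcard]
          omega
        obtain ⟨w, hw⟩ := Finset.card_eq_one.mp hd1
        have hwmem : w ∈ t \ C := hw ▸ Finset.mem_singleton_self w
        have hwt : w ∈ t := (Finset.mem_sdiff.mp hwmem).1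
        have hwC : w ∉ C := (Finset.mem_sdiff.mp hwmem).2
        have ht_eq : t = insert w C := by
          apply Finset.Subset.antisymm
          · intro x hx
            by_cases hxC : x ∈ C
            · exact Finset.mem_insert_of_mem hxC
            · have : x ∈ t \ C := Finset.mem_sdiff.mpr ⟨hx, hxC⟩
              rw [hw, Finset.mem_singleton] at this
              exact this ▸ Finset.mem_insert_self w C
          · exact Finset.insert_subset hwt hCt
        obtain ⟨j, hwj⟩ := hmem w
        have hji : j = i₀ := by
          by_contra hne
          have hsub : insert w (C ∩ S j) ⊆ t ∩ S j := by
            refine Finset.insert_subset (Finset.mem_inter.mpr ⟨hwt, hwj⟩) ?_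
            intro x hx
            rw [Finset.mem_inter] at hx ⊢
            exact ⟨hCt hx.1, hx.2⟩
          have hwCj : w ∉ C ∩ S j := fun h => hwC (Finset.mem_inter.mp h).1
          have h3 : (insert w (C ∩ S j)).card = 3 := by
            rw [Finset.card_insert_of_notMem hwCj, htwo j hne]
          have := Finset.card_le_card hsub
          have := hA t htcl j
          omega
        subst hji
        have hvt : v ∈ t := hCt hvC
        have hvw : G.Adj v w := htcl hvt hwt (fun h => hwC (h ▸ hvC))
        rcases hall w hwj hvw with rfl | rfl
        · left; exact ht_eq
        · right; exact ht_eq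
      · rintro (rfl | rfl)
        · exact ⟨haN, Finset.subset_insert a C⟩
        · exact ⟨hbN, Finset.subset_insert b C⟩
    rw [hset]
    apply Set.ncard_pair
    intro h
    have : a ∈ insert b C := h ▸ Finset.mem_insert_self a C
    rcases Finset.mem_insert.mp this with h' | h'
    · exact hab h'
    · exact haC h'
end

section
/- For an Eulerian simplicial complex K of dimension d = 2s−1 satisfying the Dehn-Sommerville relation h_{s−1}(K) = h_{s+1}(K), the face number f_s(K) is a fixed linear combination of f_{−1}(K), f₀(K), …, f_{s−1}(K) with coefficients depending only on s; consequently f_s(K) ≤ C_s · f₀(K)^s for a constant C_s depending only on s. -/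
open Polynomial Finset

private lemma neg1pow_eq {m n : ℕ} (hmn : m % 2 = n % 2) : (-1:ℝ)^m = (-1)^n := by
  rw [← Nat.div_add_mod m 2, ← Nat.div_add_mod n 2, pow_add, pow_add, pow_mul, pow_mul, hmn]
  norm_num

/-- For a `(2s-1)`-dimensional simplicial complex satisfying the middle
Dehn-Sommerville relation `h_{s-1} = h_{s+1}`, the face number `f_s` (faces of
cardinality `s+1`) is a fixed linear combination of `f_{-1}, f₀, …, f_{s-1}` (faces of
cardinality `0, 1, …, s`) with coefficients depending only on `s`; consequently
`f_s ≤ C_s · f₀^s` for a constant `C_s` depending only on `s`.  Here the `h`-vector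
is defined by `Σ_i h_i x^{d+1-i} = Σ_c f_{c-1} (x-1)^{d+1-c}` with `d = 2s-1`. -/
theorem dehnSommerville_middle_face_bound (s : ℕ) (hs : 1 ≤ s) :
    ∃ (a : ℕ → ℝ) (Cs : ℝ), ∀ (V : Type) [Fintype V] [DecidableEq V]
      (K : Finset (Finset V)),
      ∅ ∈ K → (∀ t ∈ K, ∀ u ⊆ t, u ∈ K) → (∀ t ∈ K, t.card ≤ 2 * s) →
      (∃ t ∈ K, t.card = 2 * s) →
      ∀ h : ℕ → ℝ,
        (∀ x : ℝ, ∑ i ∈ Finset.range (2 * s + 1), h i * x ^ (2 * s - i) =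
          ∑ c ∈ Finset.range (2 * s + 1),
            ((K.filter (fun t => t.card = c)).card : ℝ) * (x - 1) ^ (2 * s - c)) →
        h (s - 1) = h (s + 1) →
        (((K.filter (fun t => t.card = s + 1)).card : ℝ) =
          ∑ j ∈ Finset.range (s + 1),
            a j * ((K.filter (fun t => t.card = j)).card : ℝ)) ∧
        ((K.filter (fun t => t.card = s + 1)).card : ℝ) ≤
          Cs * ((K.filter (fun t => t.card = 1)).card : ℝ) ^ s := by
  set a : ℕ → ℝ := fun j =>
    (-1:ℝ)^(s+j) * (((2*s-j).choose (s-1) : ℝ) - ((2*s-j).choose (s+1) : ℝ)) with ha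
  refine ⟨a, ∑ j ∈ Finset.range (s+1), |a j|, ?_⟩
  intro V _ _ K hempty hdown hcard hfull h hpoly hds
  set F : ℕ → ℕ := fun c => (K.filter (fun t => t.card = c)).card with hF
  set f : ℕ → ℝ := fun c => (F c : ℝ) with hf
  -- polynomial equality
  have hpq : (∑ i ∈ Finset.range (2*s+1), C (h i) * X ^ (2*s-i))
      = ∑ c ∈ Finset.range (2*s+1), C (f c) * (X - 1 : ℝ[X]) ^ (2*s-c) := by
    apply Polynomial.funext
    intro x
    simp only [eval_finset_sum, eval_mul, eval_pow, eval_C, eval_X, eval_sub, eval_one]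
    simpa [hf, hF] using hpoly x
  -- coefficient extraction
  have hcoeffL : ∀ k i₀, i₀ ∈ Finset.range (2*s+1) → 2*s - i₀ = k →
      (∀ i ∈ Finset.range (2*s+1), i ≠ i₀ → 2*s - i ≠ k) →
      (∑ i ∈ Finset.range (2*s+1), C (h i) * X ^ (2*s-i)).coeff k = h i₀ := by
    intro k i₀ hi₀ hk huniq
    rw [finset_sum_coeff]
    rw [Finset.sum_eq_single i₀]
    · simp [coeff_C_mul, coeff_X_pow, hk]
    · intro i hi hne
      simp only [coeff_C_mul, coeff_X_pow]
      rw [if_neg (fun hk2 => huniq i hi hne hk2.symm)]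
      ring
    · intro hcon; exact absurd hi₀ hcon
  have hcoeffR : ∀ k, (∑ c ∈ Finset.range (2*s+1), C (f c) * (X - 1 : ℝ[X]) ^ (2*s-c)).coeff k
      = ∑ c ∈ Finset.range (2*s+1), f c * ((-1:ℝ)^(2*s-c-k) * ((2*s-c).choose k : ℝ)) := by
    intro k
    rw [finset_sum_coeff]
    refine Finset.sum_congr rfl fun c _ => ?_
    rw [coeff_C_mul]
    congr 1
    have hX : (X - 1 : ℝ[X]) = X + C (-1) := by simp [sub_eq_add_neg]
    rw [hX, coeff_X_add_C_pow]
  have hA : h (s+1) = ∑ c ∈ Finset.range (2*s+1),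
      f c * ((-1:ℝ)^(2*s-c-(s-1)) * ((2*s-c).choose (s-1) : ℝ)) := by
    rw [← hcoeffR (s-1), ← hpq]
    symm
    apply hcoeffL (s-1) (s+1)
    · simp only [Finset.mem_range]; omega
    · omega
    · intro i hi hne; simp only [Finset.mem_range] at hi; omega
  have hB : h (s-1) = ∑ c ∈ Finset.range (2*s+1),
      f c * ((-1:ℝ)^(2*s-c-(s+1)) * ((2*s-c).choose (s+1) : ℝ)) := by
    rw [← hcoeffR (s+1), ← hpq]
    symm
    apply hcoeffL (s+1) (s-1)
    · simp only [Finset.mem_range]; omega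
    · omega
    · intro i hi hne; simp only [Finset.mem_range] at hi; omega
  -- the linear relation
  have hzero : ∑ c ∈ Finset.range (2*s+1),
      f c * ((-1:ℝ)^(2*s-c-(s-1)) * ((2*s-c).choose (s-1) : ℝ)
        - (-1:ℝ)^(2*s-c-(s+1)) * ((2*s-c).choose (s+1) : ℝ)) = 0 := by
    simp only [mul_sub]
    rw [Finset.sum_sub_distrib, ← hA, ← hB, hds, sub_self]
  -- split the sum
  have hsplit : ∑ c ∈ Finset.range (2*s+1),
      f c * ((-1:ℝ)^(2*s-c-(s-1)) * ((2*s-c).choose (s-1) : ℝ)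
        - (-1:ℝ)^(2*s-c-(s+1)) * ((2*s-c).choose (s+1) : ℝ))
      = (∑ j ∈ Finset.range (s+1), -(a j * f j)) + f (s+1) := by
    have h1 : Finset.range (2*s+1) = Finset.Ico 0 (2*s+1) := by
      rw [Finset.range_eq_Ico]
    rw [h1, ← Finset.sum_Ico_consecutive _ (Nat.zero_le (s+2)) (by omega : s+2 ≤ 2*s+1)]
    have h2 : ∑ c ∈ Finset.Ico (s+2) (2*s+1),
        f c * ((-1:ℝ)^(2*s-c-(s-1)) * ((2*s-c).choose (s-1) : ℝ)
          - (-1:ℝ)^(2*s-c-(s+1)) * ((2*s-c).choose (s+1) : ℝ)) = 0 := by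
      apply Finset.sum_eq_zero
      intro c hc
      simp only [Finset.mem_Ico] at hc
      rw [Nat.choose_eq_zero_of_lt (by omega), Nat.choose_eq_zero_of_lt (by omega)]
      simp
    rw [h2, add_zero, ← Finset.range_eq_Ico, Finset.sum_range_succ]
    congr 1
    · refine Finset.sum_congr rfl fun j hj => ?_
      simp only [Finset.mem_range] at hj
      have hj' : j ≤ s := by omega
      rw [ha]
      simp only [neg_mul, mul_sub, sub_eq_add_neg, neg_add, neg_neg, neg_mul]
      have e1 : (-1:ℝ)^(2*s-j-(s-1)) = -((-1:ℝ)^(s+j)) := by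
        have : (-1:ℝ)^(2*s-j-(s-1)) = (-1:ℝ)^(s+j+1) := neg1pow_eq (by omega)
        rw [this, pow_succ]; ring
      by_cases hjs : j = s
      · have hz : (((2*s-j).choose (s+1) : ℕ) : ℝ) = 0 := by
          rw [hjs, Nat.choose_eq_zero_of_lt (by omega)]
          simp
        rw [hz, e1]
        ring
      · have e2 : (-1:ℝ)^(2*s-j-(s+1)) = -((-1:ℝ)^(s+j)) := by
          have : (-1:ℝ)^(2*s-j-(s+1)) = (-1:ℝ)^(s+j+1) := neg1pow_eq (by omega)
          rw [this, pow_succ]; ring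
        rw [e1, e2]
        ring
    · have e3 : 2*s-(s+1)-(s-1) = 0 := by omega
      have e4 : 2*s-(s+1)-(s+1) = 0 := by omega
      have e5 : 2*s-(s+1) = s-1 := by omega
      rw [e3, e4, e5, Nat.choose_self, Nat.choose_eq_zero_of_lt (by omega)]
      simp [mul_comm]
  have hrel : f (s+1) = ∑ j ∈ Finset.range (s+1), a j * f j := by
    rw [hsplit] at hzero
    rw [Finset.sum_neg_distrib] at hzero
    linarith
  refine ⟨hrel, ?_⟩
  -- the bound
  have hFj : ∀ j, F j ≤ F 1 ^ j := by
    intro j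
    classical
    set W : Finset V := Finset.univ.filter (fun v => ({v} : Finset V) ∈ K) with hW
    have hWcard : W.card = F 1 := by
      have himg : K.filter (fun t => t.card = 1) = W.image (fun v => ({v} : Finset V)) := by
        ext t
        simp only [Finset.mem_filter, Finset.mem_image, hW, Finset.mem_univ, true_and]
        constructor
        · rintro ⟨htK, htc⟩
          obtain ⟨v, rfl⟩ := Finset.card_eq_one.mp htc
          exact ⟨v, htK, rfl⟩
        · rintro ⟨v, hv, rfl⟩
          exact ⟨hv, Finset.card_singleton v⟩
      rw [hF]
      simp only
      rw [himg, Finset.card_image_of_injective _ (fun x y hxy => by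
        simpa using hxy)]
    have hsub : K.filter (fun t => t.card = j) ⊆ W.powersetCard j := by
      intro t ht
      simp only [Finset.mem_filter] at ht
      rw [Finset.mem_powersetCard]
      refine ⟨fun v hv => ?_, ht.2⟩
      simp only [hW, Finset.mem_filter, Finset.mem_univ, true_and]
      exact hdown t ht.1 {v} (Finset.singleton_subset_iff.mpr hv)
    calc F j ≤ (W.powersetCard j).card := Finset.card_le_card hsub
      _ = W.card.choose j := Finset.card_powersetCard j W
      _ ≤ W.card ^ j := Nat.choose_le_pow _ _
      _ = F 1 ^ j := by rw [hWcard]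
  have hn1 : 1 ≤ F 1 := by
    obtain ⟨t, htK, htc⟩ := hfull
    have htne : t.Nonempty := by
      rw [← Finset.card_pos, htc]; omega
    obtain ⟨v, hv⟩ := htne
    have : ({v} : Finset V) ∈ K.filter (fun t => t.card = 1) := by
      simp only [Finset.mem_filter, Finset.card_singleton, and_true]
      exact hdown t htK {v} (Finset.singleton_subset_iff.mpr hv)
    exact Finset.card_pos.mpr ⟨{v}, this⟩
  have hfjs : ∀ j ∈ Finset.range (s+1), f j ≤ (F 1 : ℝ) ^ s := by
    intro j hj
    simp only [Finset.mem_range] at hj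
    calc f j = (F j : ℝ) := rfl
      _ ≤ (F 1 : ℝ) ^ j := by exact_mod_cast hFj j
      _ ≤ (F 1 : ℝ) ^ s := by
        apply pow_le_pow_right₀ (by exact_mod_cast hn1) (by omega)
  calc f (s+1) = ∑ j ∈ Finset.range (s+1), a j * f j := hrel
    _ ≤ ∑ j ∈ Finset.range (s+1), |a j| * (F 1 : ℝ) ^ s := by
        apply Finset.sum_le_sum
        intro j hj
        calc a j * f j ≤ |a j| * f j :=
              mul_le_mul_of_nonneg_right (le_abs_self _) (by positivity)
          _ ≤ |a j| * (F 1 : ℝ) ^ s :=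
              mul_le_mul_of_nonneg_left (hfjs j hj) (abs_nonneg _)
    _ = (∑ j ∈ Finset.range (s+1), |a j|) * (F 1 : ℝ) ^ s := by
        rw [Finset.sum_mul]
end
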